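/- The two-dimensional Lebesgue measure (area) of the region D equals π/6; consequently the measure with constant density 2π on D has total mass π²/3. -/

import Mathlib

open MeasureTheory Real

/-- The region `D = {(x,y) : x > 0, |y| ≤ x/2, and if x > 1 then y² ≥ x² - x⁻²}`,
parametrizing a fundamental domain for `SL₂(ℝ)/SL₂^±(ℤ)`. -/
def Dset : Set (ℝ × ℝ) :=
  {p | 0 < p.1 ∧ |p.2| ≤ p.1 / 2 ∧ (1 < p.1 → p.1 ^ 2 - (p.1 ^ 2)⁻¹ ≤ p.2 ^ 2)}

noncomputable def aTop : ℝ := Real.sqrt (2 / Real.sqrt 3)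

noncomputable def cfun (x : ℝ) : ℝ := Real.sqrt (x ^ 2 - (x ^ 2)⁻¹)

lemma s3_pos : (0:ℝ) < Real.sqrt 3 := Real.sqrt_pos.2 (by norm_num)

lemma s3_sq : Real.sqrt 3 ^ 2 = 3 := Real.sq_sqrt (by norm_num)

lemma aTop_sq : aTop ^ 2 = 2 / Real.sqrt 3 := by
  have : (0:ℝ) ≤ 2 / Real.sqrt 3 := by positivity
  simpa [aTop] using Real.sq_sqrt this

lemma aTop_pow4 : aTop ^ 4 = 4 / 3 := by
  have h := aTop_sq
  have h3 := s3_sq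
  have : aTop ^ 4 = (aTop ^ 2) ^ 2 := by ring
  rw [this, h]
  rw [div_pow]
  rw [h3]
  norm_num

lemma one_lt_aTop : 1 < aTop := by
  have h2 : Real.sqrt 3 < 2 := by
    nlinarith [s3_sq, s3_pos]
  have : (1:ℝ) < 2 / Real.sqrt 3 := (one_lt_div s3_pos).2 h2
  rw [aTop]
  rw [show (1:ℝ) = Real.sqrt 1 by simp]
  exact Real.sqrt_lt_sqrt (by norm_num) (by linarith)

lemma measurableSet_Dset : MeasurableSet Dset := by
  have : Dset = {p : ℝ × ℝ | 0 < p.1} ∩ ({p | |p.2| ≤ p.1 / 2} ∩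
      ({p | p.1 ≤ 1} ∪ {p | p.1 ^ 2 - (p.1 ^ 2)⁻¹ ≤ p.2 ^ 2})) := by
    ext p
    simp only [Dset, Set.mem_setOf_eq, Set.mem_inter_iff, Set.mem_union, not_lt]
    constructor
    · rintro ⟨h1, h2, h3⟩
      refine ⟨h1, h2, ?_⟩
      by_cases h : 1 < p.1
      · exact Or.inr (h3 h)
      · exact Or.inl (le_of_not_gt h)
    · rintro ⟨h1, h2, h3⟩
      refine ⟨h1, h2, fun h => ?_⟩
      rcases h3 with h3 | h3
      · linarith
      · exact h3
  rw [this]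
  apply MeasurableSet.inter
  · exact measurableSet_lt measurable_const measurable_fst
  apply MeasurableSet.inter
  · exact measurableSet_le measurable_snd.abs (measurable_fst.div_const 2)
  apply MeasurableSet.union
  · exact measurableSet_le measurable_fst measurable_const
  · exact measurableSet_le (((measurable_fst.pow_const 2).sub
      (measurable_fst.pow_const 2).inv)) (measurable_snd.pow_const 2)

lemma sec_nonpos {x : ℝ} (hx : x ≤ 0) : {y : ℝ | (x, y) ∈ Dset} = ∅ := by
  ext y; simp only [Dset, Set.mem_setOf_eq, Set.mem_empty_iff_false, iff_false]
  rintro ⟨h1, -⟩; linarith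

lemma sec_01 {x : ℝ} (h0 : 0 < x) (h1 : x ≤ 1) :
    {y : ℝ | (x, y) ∈ Dset} = Set.Icc (-(x / 2)) (x / 2) := by
  ext y
  simp only [Dset, Set.mem_setOf_eq, Set.mem_Icc]
  rw [abs_le]
  constructor
  · rintro ⟨-, h2, -⟩; exact h2
  · rintro ⟨hy1, hy2⟩
    exact ⟨h0, ⟨hy1, hy2⟩, fun h => absurd h (not_lt.2 h1)⟩

lemma cfun_sq {x : ℝ} (h1 : 1 ≤ x) : cfun x ^ 2 = x ^ 2 - (x ^ 2)⁻¹ := by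
  have hx : (0:ℝ) < x := lt_of_lt_of_le one_pos h1
  have : (0:ℝ) ≤ x ^ 2 - (x ^ 2)⁻¹ := by
    have h2 : (1:ℝ) ≤ x ^ 2 := by nlinarith
    have : (x ^ 2)⁻¹ ≤ 1 := by
      rw [inv_le_one_iff₀]; right; exact h2
    linarith
  exact Real.sq_sqrt this

lemma cfun_nonneg (x : ℝ) : 0 ≤ cfun x := Real.sqrt_nonneg _

lemma cfun_pos {x : ℝ} (h1 : 1 < x) : 0 < cfun x := by
  apply Real.sqrt_pos.2
  have hx2 : (1:ℝ) < x ^ 2 := by nlinarith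
  have : (x ^ 2)⁻¹ < 1 := by
    rw [inv_lt_one_iff₀]; right; exact hx2
  linarith

lemma sec_gt1 {x : ℝ} (h1 : 1 < x) :
    {y : ℝ | (x, y) ∈ Dset} =
      Set.Icc (-(x / 2)) (-(cfun x)) ∪ Set.Icc (cfun x) (x / 2) := by
  have hx : (0:ℝ) < x := lt_trans one_pos h1
  have hcs := cfun_sq h1.le
  have key : ∀ y : ℝ, (x ^ 2 - (x ^ 2)⁻¹ ≤ y ^ 2 ↔ cfun x ≤ |y|) := by
    intro y
    constructor
    · intro h
      have := Real.sqrt_le_sqrt h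
      rwa [Real.sqrt_sq_eq_abs] at this
    · intro h
      have := mul_self_le_mul_self (cfun_nonneg x) h
      calc x ^ 2 - (x ^ 2)⁻¹ = cfun x ^ 2 := hcs.symm
        _ ≤ |y| ^ 2 := by nlinarith
        _ = y ^ 2 := sq_abs y
  ext y
  simp only [Dset, Set.mem_setOf_eq, Set.mem_union, Set.mem_Icc]
  constructor
  · rintro ⟨-, h2, h3⟩
    have hc : cfun x ≤ |y| := (key y).1 (h3 h1)
    rw [abs_le] at h2
    rcases le_or_gt 0 y with hy | hy
    · right
      rw [abs_of_nonneg hy] at hc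
      exact ⟨hc, h2.2⟩
    · left
      rw [abs_of_neg hy] at hc
      constructor
      · exact h2.1
      · linarith
  · intro h
    refine ⟨hx, ?_, fun _ => (key y).2 ?_⟩
    · rw [abs_le]
      rcases h with ⟨hy1, hy2⟩ | ⟨hy1, hy2⟩
      · constructor
        · exact hy1
        · have := cfun_nonneg x; linarith
      · constructor
        · have := cfun_nonneg x; linarith
        · exact hy2
    · rcases h with ⟨hy1, hy2⟩ | ⟨hy1, hy2⟩
      · rw [abs_of_nonpos (by have := cfun_nonneg x; linarith)]
        linarith
      · rw [abs_of_nonneg (by have := cfun_nonneg x; linarith)]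
        exact hy1

lemma cfun_le {x : ℝ} (h1 : 1 < x) (hA : x ≤ aTop) : cfun x ≤ x / 2 := by
  have hx : (0:ℝ) < x := lt_trans one_pos h1
  have hx4 : x ^ 4 ≤ 4 / 3 := by
    calc x ^ 4 ≤ aTop ^ 4 := by
          apply pow_le_pow_left₀ hx.le hA
    _ = 4 / 3 := aTop_pow4
  have key : x ^ 2 - (x ^ 2)⁻¹ ≤ (x / 2) ^ 2 := by
    have hx2 : (0:ℝ) < x ^ 2 := by positivity
    have hinv : (x ^ 2)⁻¹ * x ^ 2 = 1 := inv_mul_cancel₀ (ne_of_gt hx2)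
    nlinarith [hinv, hx4, hx2, inv_pos.2 hx2]
  calc cfun x = Real.sqrt (x ^ 2 - (x ^ 2)⁻¹) := rfl
    _ ≤ Real.sqrt ((x / 2) ^ 2) := Real.sqrt_le_sqrt key
    _ = x / 2 := Real.sqrt_sq (by positivity)

lemma cfun_gt {x : ℝ} (hA : aTop < x) : x / 2 < cfun x := by
  have h1 : (1:ℝ) < x := lt_trans one_lt_aTop hA
  have hx : (0:ℝ) < x := lt_trans one_pos h1
  have hx2 : (0:ℝ) < x ^ 2 := by positivity
  have hx4 : 4 / 3 < x ^ 4 := by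
    calc (4:ℝ)/3 = aTop ^ 4 := aTop_pow4.symm
    _ < x ^ 4 := by
        apply pow_lt_pow_left₀ hA (le_of_lt (lt_trans one_pos one_lt_aTop))
        norm_num
  have key : (x / 2) ^ 2 < x ^ 2 - (x ^ 2)⁻¹ := by
    have hinv : (x ^ 2)⁻¹ * x ^ 2 = 1 := inv_mul_cancel₀ (ne_of_gt hx2)
    nlinarith [hinv, inv_pos.2 hx2]
  rw [cfun]
  rw [show x / 2 = Real.sqrt ((x / 2) ^ 2) from (Real.sqrt_sq (by positivity)).symm]
  exact Real.sqrt_lt_sqrt (by positivity) key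

lemma vol_sec_nonpos {x : ℝ} (hx : x ≤ 0) : volume {y : ℝ | (x, y) ∈ Dset} = 0 := by
  rw [sec_nonpos hx]; simp

lemma vol_sec_01 {x : ℝ} (h0 : 0 < x) (h1 : x ≤ 1) :
    volume {y : ℝ | (x, y) ∈ Dset} = ENNReal.ofReal x := by
  rw [sec_01 h0 h1, Real.volume_Icc]
  congr 1; ring

lemma vol_sec_gt1 {x : ℝ} (h1 : 1 < x) :
    volume {y : ℝ | (x, y) ∈ Dset} =
      ENNReal.ofReal (x / 2 - cfun x) + ENNReal.ofReal (x / 2 - cfun x) := by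
  rw [sec_gt1 h1]
  have hc := cfun_pos h1
  have hdisj : Disjoint (Set.Icc (-(x / 2)) (-(cfun x))) (Set.Icc (cfun x) (x / 2)) := by
    rw [Set.disjoint_left]
    rintro y ⟨-, hy2⟩ ⟨hy3, -⟩
    linarith
  rw [measure_union hdisj measurableSet_Icc, Real.volume_Icc, Real.volume_Icc]
  congr 1 <;> congr 1 <;> ring

lemma vol_sec_1a {x : ℝ} (h1 : 1 < x) (hA : x ≤ aTop) :
    volume {y : ℝ | (x, y) ∈ Dset} = ENNReal.ofReal (x - 2 * cfun x) := by
  rw [vol_sec_gt1 h1]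
  have h := cfun_le h1 hA
  rw [← ENNReal.ofReal_add (by linarith) (by linarith)]
  congr 1; ring

lemma vol_sec_gtA {x : ℝ} (hA : aTop < x) : volume {y : ℝ | (x, y) ∈ Dset} = 0 := by
  have h1 : 1 < x := lt_trans one_lt_aTop hA
  rw [vol_sec_gt1 h1]
  have h := cfun_gt hA
  rw [ENNReal.ofReal_eq_zero.2 (by linarith), add_zero]

noncomputable def Fanti (x : ℝ) : ℝ :=
  x ^ 2 / 2 - Real.sqrt (x ^ 4 - 1) + Real.arccos ((x ^ 2)⁻¹)

lemma hasDeriv_Fanti {x : ℝ} (h1 : 1 < x) :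
    HasDerivAt Fanti (x - 2 * cfun x) x := by
  have hx : (0:ℝ) < x := lt_trans one_pos h1
  have hx2 : (1:ℝ) < x ^ 2 := by nlinarith
  have hx4 : (0:ℝ) < x ^ 4 - 1 := by nlinarith
  set s := Real.sqrt (x ^ 4 - 1) with hs_def
  have hs_pos : 0 < s := Real.sqrt_pos.2 hx4
  have hs_sq : s ^ 2 = x ^ 4 - 1 := Real.sq_sqrt hx4.le
  -- cfun x = s / x
  have hcf : cfun x = s / x := by
    have heq : x ^ 2 - (x ^ 2)⁻¹ = (s / x) ^ 2 := by
      rw [div_pow, hs_sq]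
      field_simp
    rw [cfun, heq, Real.sqrt_sq (by positivity)]
  -- inner value of arccos
  have ht_lt : (x ^ 2)⁻¹ < 1 := by
    rw [inv_lt_one_iff₀]; right; exact hx2
  have ht_pos : (0:ℝ) < (x ^ 2)⁻¹ := by positivity
  have hsqrt1 : Real.sqrt (1 - ((x ^ 2)⁻¹) ^ 2) = s / x ^ 2 := by
    have heq : 1 - ((x ^ 2)⁻¹) ^ 2 = (s / x ^ 2) ^ 2 := by
      rw [div_pow, hs_sq]
      field_simp
    rw [heq, Real.sqrt_sq (by positivity)]
  have d1 : HasDerivAt (fun y : ℝ => y ^ 2 / 2) x x := by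
    have := (hasDerivAt_pow 2 x).div_const 2
    refine this.congr_deriv ?_
    push_cast
    ring
  have d2 : HasDerivAt (fun y : ℝ => Real.sqrt (y ^ 4 - 1)) ((4 * x ^ 3) / (2 * s)) x := by
    have hin : HasDerivAt (fun y : ℝ => y ^ 4 - 1) (4 * x ^ 3) x := by
      have := (hasDerivAt_pow 4 x).sub_const 1
      refine this.congr_deriv ?_ <;> (push_cast; ring)
    exact hin.sqrt (ne_of_gt hx4)
  have d3 : HasDerivAt (fun y : ℝ => Real.arccos ((y ^ 2)⁻¹))
      (-(1 / (s / x ^ 2)) * (-(2 * x) / (x ^ 2) ^ 2)) x := by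
    have hin : HasDerivAt (fun y : ℝ => ((y ^ 2)⁻¹)) (-(2 * x) / (x ^ 2) ^ 2) x := by
      have := (hasDerivAt_pow 2 x).inv (by positivity)
      refine this.congr_deriv ?_
      push_cast
      ring
    have harc : HasDerivAt Real.arccos (-(1 / Real.sqrt (1 - ((x ^ 2)⁻¹) ^ 2))) ((x ^ 2)⁻¹) :=
      Real.hasDerivAt_arccos (by linarith) (by linarith)
    have := harc.comp x hin
    rw [hsqrt1] at this
    exact this
  have total := (d1.sub d2).add d3
  have : Fanti = fun y : ℝ => y ^ 2 / 2 - Real.sqrt (y ^ 4 - 1) + Real.arccos ((y ^ 2)⁻¹) := by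
    funext y; rfl
  rw [this]
  refine total.congr_deriv ?_
  rw [hcf]
  field_simp
  linear_combination 4 * hs_sq

lemma continuousOn_g : ContinuousOn (fun x : ℝ => x - 2 * cfun x) (Set.Icc 1 aTop) := by
  apply ContinuousOn.sub continuousOn_id
  apply ContinuousOn.mul continuousOn_const
  apply Real.continuous_sqrt.comp_continuousOn
  apply ContinuousOn.sub (continuous_pow 2).continuousOn
  apply ContinuousOn.inv₀ (continuous_pow 2).continuousOn
  intro x hx
  have : (1:ℝ) ≤ x := hx.1
  positivity

lemma continuousOn_Fanti : ContinuousOn Fanti (Set.Icc 1 aTop) := by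
  have h1 : ContinuousOn (fun x : ℝ => x ^ 2 / 2) (Set.Icc 1 aTop) :=
    ((continuous_pow 2).div_const 2).continuousOn
  have h2 : ContinuousOn (fun x : ℝ => Real.sqrt (x ^ 4 - 1)) (Set.Icc 1 aTop) :=
    Real.continuous_sqrt.comp_continuousOn
      (((continuous_pow 4).sub continuous_const).continuousOn)
  have h3 : ContinuousOn (fun x : ℝ => Real.arccos ((x ^ 2)⁻¹)) (Set.Icc 1 aTop) := by
    apply Real.continuous_arccos.comp_continuousOn
    apply ContinuousOn.inv₀ (continuous_pow 2).continuousOn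
    intro x hx
    have : (1:ℝ) ≤ x := hx.1
    positivity
  exact (h1.sub h2).add h3

lemma arccos_sqrt3_div_2 : Real.arccos (Real.sqrt 3 / 2) = π / 6 := by
  rw [show Real.sqrt 3 / 2 = Real.cos (π / 6) from (Real.cos_pi_div_six).symm]
  exact Real.arccos_cos (by positivity) (by linarith [Real.pi_pos])

lemma Fanti_one : Fanti 1 = 1 / 2 := by
  simp [Fanti, Real.arccos_one]

lemma Fanti_aTop : Fanti aTop = π / 6 := by
  have h2 := aTop_sq
  have h4 := aTop_pow4
  have hs3 := s3_sq
  have hs3p := s3_pos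
  have e1 : aTop ^ 4 - 1 = 3⁻¹ := by rw [h4]; norm_num
  have e2 : Real.sqrt (3⁻¹ : ℝ) = (Real.sqrt 3)⁻¹ := Real.sqrt_inv 3
  have e3 : (aTop ^ 2)⁻¹ = Real.sqrt 3 / 2 := by
    rw [h2]
    field_simp
  rw [Fanti, e1, e2, e3, arccos_sqrt3_div_2, h2]
  have : 2 / Real.sqrt 3 / 2 = (Real.sqrt 3)⁻¹ := by
    rw [div_div, mul_comm, ← div_div, div_self (by norm_num : (2:ℝ) ≠ 0), one_div]
  rw [this]
  ring

lemma integral_1a : ∫ x in (1:ℝ)..aTop, (x - 2 * cfun x) = π / 6 - 1 / 2 := by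
  have hab : (1:ℝ) ≤ aTop := one_lt_aTop.le
  have hint : IntervalIntegrable (fun x : ℝ => x - 2 * cfun x) volume 1 aTop := by
    apply ContinuousOn.intervalIntegrable
    rw [Set.uIcc_of_le hab]
    exact continuousOn_g
  rw [intervalIntegral.integral_eq_sub_of_hasDeriv_right_of_le hab continuousOn_Fanti
    (fun x hx => (hasDeriv_Fanti hx.1).hasDerivWithinAt) hint]
  rw [Fanti_one, Fanti_aTop]

lemma vol_Dset : volume Dset = ENNReal.ofReal (π / 6) := by
  rw [MeasureTheory.Measure.volume_eq_prod, Measure.prod_apply measurableSet_Dset]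
  have hsec : ∀ x : ℝ, (Prod.mk x ⁻¹' Dset) = {y : ℝ | (x, y) ∈ Dset} := fun _ => rfl
  have hind : (fun x : ℝ => volume (Prod.mk x ⁻¹' Dset)) =
      (Set.Ioc (0:ℝ) aTop).indicator (fun x => volume (Prod.mk x ⁻¹' Dset)) := by
    funext x
    by_cases hx : x ∈ Set.Ioc (0:ℝ) aTop
    · rw [Set.indicator_of_mem hx]
    · rw [Set.indicator_of_notMem hx]
      rw [Set.mem_Ioc, not_and_or, not_lt, not_le] at hx
      rcases hx with hx | hx
      · rw [hsec x]; exact vol_sec_nonpos hx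
      · rw [hsec x]; exact vol_sec_gtA hx
  rw [hind, lintegral_indicator measurableSet_Ioc]
  rw [← Set.Ioc_union_Ioc_eq_Ioc zero_le_one one_lt_aTop.le]
  rw [lintegral_union measurableSet_Ioc (Set.Ioc_disjoint_Ioc_of_le le_rfl)]
  have p1 : ∫⁻ x in Set.Ioc (0:ℝ) 1, volume (Prod.mk x ⁻¹' Dset) =
      ENNReal.ofReal (1 / 2) := by
    simp only [hsec]
    rw [setLIntegral_congr_fun measurableSet_Ioc
      (fun x hx => vol_sec_01 hx.1 hx.2)]
    rw [← MeasureTheory.ofReal_integral_eq_lintegral_ofReal]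
    · congr 1
      rw [← intervalIntegral.integral_of_le zero_le_one]
      simpa using integral_id
    · exact continuous_id.integrableOn_Ioc
    · exact (ae_restrict_iff' measurableSet_Ioc).2 (ae_of_all _ fun x hx => hx.1.le)
  have p2 : ∫⁻ x in Set.Ioc (1:ℝ) aTop, volume (Prod.mk x ⁻¹' Dset) =
      ENNReal.ofReal (π / 6 - 1 / 2) := by
    simp only [hsec]
    rw [setLIntegral_congr_fun measurableSet_Ioc
      (fun x hx => vol_sec_1a hx.1 hx.2)]
    rw [← MeasureTheory.ofReal_integral_eq_lintegral_ofReal]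
    · congr 1
      rw [← intervalIntegral.integral_of_le one_lt_aTop.le]
      exact integral_1a
    · exact (continuousOn_g.integrableOn_compact isCompact_Icc).mono_set
        Set.Ioc_subset_Icc_self
    · refine (ae_restrict_iff' measurableSet_Ioc).2 (ae_of_all _ fun x hx => ?_)
      have := cfun_le hx.1 hx.2
      simp only [Pi.zero_apply]
      linarith
  rw [p1, p2, ← ENNReal.ofReal_add (by norm_num)
    (by nlinarith [Real.pi_gt_three])]
  congr 1
  ring

theorem stmt14 :
    volume Dset = ENNReal.ofReal (π / 6) ∧
      2 * π * (volume Dset).toReal = π ^ 2 / 3 := by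
  refine ⟨vol_Dset, ?_⟩
  rw [vol_Dset, ENNReal.toReal_ofReal (by positivity)]
  ring
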